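/- Let Y be a real symmetric n×n matrix. There exists a nonzero real vector x with xᵀY = 0 if and only if det Y = 0. Consequently, for X real symmetric and Z = X + iY, the spans of the rows wᵢ = pᵢ + Σⱼ Zᵢⱼ qⱼ and their conjugates w̄ᵢ = pᵢ + Σⱼ Z̄ᵢⱼ qⱼ (where (p,q) is a basis of a 2n-dimensional space) intersect nontrivially if and only if det Y = 0. -/

import Mathlib

open Matrix Complex

lemma my_repr_sum {n : ℕ} {V : Type} [AddCommGroup V] [Module ℂ V]
    (b : Module.Basis (Fin n ⊕ Fin n) ℂ V) (a : Fin n → ℂ) (M : Fin n → Fin n → ℂ)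
    (k : Fin n ⊕ Fin n) :
    b.repr (∑ i, a i • (b (Sum.inl i) + ∑ j, M i j • b (Sum.inr j))) k =
      Sum.elim (fun k => a k) (fun k => ∑ i, a i * M i k) k := by
  simp only [map_sum, _root_.map_smul, map_add, Module.Basis.repr_self, Finsupp.coe_finset_sum,
    Finsupp.coe_add, Finsupp.coe_smul, Finset.sum_apply, Pi.smul_apply, Pi.add_apply,
    Finsupp.single_apply, smul_eq_mul]
  cases k with
  | inl k =>
    simp [Finsupp.single_apply, Finset.sum_ite_eq']
  | inr k =>
    simp [Finsupp.single_apply, Finset.sum_ite_eq']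

/-- For `Y` real symmetric: there is a nonzero real vector `x` with `xᵀY = 0` iff
`det Y = 0`; and, for `X` real symmetric and `Z = X + iY`, the spans of the
vectors `wᵢ = pᵢ + Σⱼ Zᵢⱼ qⱼ` and of their conjugates `w̄ᵢ = pᵢ + Σⱼ Z̄ᵢⱼ qⱼ`
(in a `2n`-dimensional space with basis `(p, q)`) intersect nontrivially iff
`det Y = 0`. -/
theorem spans_intersect_iff_det_eq_zero {n : ℕ} (X Y : Matrix (Fin n) (Fin n) ℝ)
    (hX : X.IsSymm) (hY : Y.IsSymm) :
    ((∃ x : Fin n → ℝ, x ≠ 0 ∧ Matrix.vecMul x Y = 0) ↔ Y.det = 0) ∧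
    (∀ (V : Type) (_ : AddCommGroup V) (_ : Module ℂ V) (b : Module.Basis (Fin n ⊕ Fin n) ℂ V)
      (w wbar : Fin n → V),
      (∀ i, w i = b (Sum.inl i) +
          ∑ j, ((X i j : ℂ) + Complex.I * (Y i j : ℂ)) • b (Sum.inr j)) →
      (∀ i, wbar i = b (Sum.inl i) +
          ∑ j, ((X i j : ℂ) - Complex.I * (Y i j : ℂ)) • b (Sum.inr j)) →
      (Submodule.span ℂ (Set.range w) ⊓ Submodule.span ℂ (Set.range wbar) ≠ ⊥ ↔
        Y.det = 0)) := by
  have h1 : (∃ x : Fin n → ℝ, x ≠ 0 ∧ Matrix.vecMul x Y = 0) ↔ Y.det = 0 :=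
    Matrix.exists_vecMul_eq_zero_iff
  refine ⟨h1, ?_⟩
  intro V _ _ b w wbar hw hwbar
  constructor
  · -- intersection nontrivial → det Y = 0
    intro hne
    obtain ⟨v, hv, hv0⟩ := Submodule.exists_mem_ne_zero_of_ne_bot hne
    obtain ⟨hvw, hvwb⟩ := Submodule.mem_inf.mp hv
    rw [Finsupp.mem_span_range_iff_exists_finsupp] at hvw hvwb
    obtain ⟨a, ha⟩ := hvw
    obtain ⟨c, hc⟩ := hvwb
    rw [Finsupp.sum_fintype _ _ (by simp)] at ha hc
    -- coordinates of v
    have hwrep : ∀ k, b.repr v k =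
        Sum.elim (fun k => a k) (fun k => ∑ i, a i * ((X i k : ℂ) + Complex.I * Y i k)) k := by
      intro k
      rw [← ha]
      simp only [hw]
      exact my_repr_sum b a _ k
    have hwbrep : ∀ k, b.repr v k =
        Sum.elim (fun k => c k) (fun k => ∑ i, c i * ((X i k : ℂ) - Complex.I * Y i k)) k := by
      intro k
      rw [← hc]
      simp only [hwbar]
      exact my_repr_sum b c _ k
    have hac : ∀ k, a k = c k := by
      intro k
      have := (hwrep (Sum.inl k)).symm.trans (hwbrep (Sum.inl k))
      simpa using this
    have hkey : ∀ k, ∑ i, a i * (Y i k : ℂ) = 0 := by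
      intro k
      have h := (hwrep (Sum.inr k)).symm.trans (hwbrep (Sum.inr k))
      simp only [Sum.elim_inr] at h
      have h2 : ∑ i, a i * ((X i k : ℂ) + Complex.I * Y i k)
          - ∑ i, a i * ((X i k : ℂ) - Complex.I * Y i k) = 0 := by
        simp only [hac] at h ⊢; rw [h]; ring
      rw [← Finset.sum_sub_distrib] at h2
      have h3 : (2 * Complex.I) * ∑ i, a i * (Y i k : ℂ) = 0 := by
        rw [Finset.mul_sum]; rw [← h2]
        apply Finset.sum_congr rfl
        intro i _; ring
      have : (2 : ℂ) * Complex.I ≠ 0 := by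
        simp [Complex.I_ne_zero]
      exact (mul_eq_zero.mp h3).resolve_left this
    have ha0 : (a : Fin n → ℂ) ≠ 0 := by
      intro h0
      apply hv0
      rw [← ha]
      have : ∀ i, a i = 0 := fun i => congrFun h0 i
      simp [this]
    have hre : ∀ k, ∑ i, (a i).re * Y i k = 0 := by
      intro k
      have h := congrArg Complex.re (hkey k)
      simpa [Complex.re_sum, Complex.mul_re] using h
    have him : ∀ k, ∑ i, (a i).im * Y i k = 0 := by
      intro k
      have h := congrArg Complex.im (hkey k)
      simpa [Complex.im_sum, Complex.mul_im] using h
    apply h1.mp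
    by_cases har : (fun i => (a i).re) = 0
    · refine ⟨fun i => (a i).im, ?_, ?_⟩
      · intro h0
        apply ha0
        funext i
        exact Complex.ext (congrFun har i) (congrFun h0 i)
      · funext k
        simpa [Matrix.vecMul, dotProduct] using him k
    · exact ⟨fun i => (a i).re, har, by
        funext k
        simpa [Matrix.vecMul, dotProduct] using hre k⟩
  · -- det Y = 0 → intersection nontrivial
    intro hdet
    obtain ⟨x, hx0, hxY⟩ := h1.mpr hdet
    set u : V := ∑ i, (x i : ℂ) • w i with hu
    have hrepu : ∀ k, b.repr u k =
        Sum.elim (fun k => (x k : ℂ))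
          (fun k => ∑ i, (x i : ℂ) * ((X i k : ℂ) + Complex.I * Y i k)) k := by
      intro k
      rw [hu]
      simp only [hw]
      exact my_repr_sum b _ _ k
    have hYx : ∀ k, ∑ i, (x i : ℂ) * (Y i k : ℂ) = 0 := by
      intro k
      have := congrFun hxY k
      simp only [Matrix.vecMul, dotProduct, Pi.zero_apply] at this
      exact_mod_cast congrArg (Complex.ofReal) this
    have hueq : u = ∑ i, (x i : ℂ) • wbar i := by
      apply b.repr.injective
      ext k
      rw [hrepu k]
      have : b.repr (∑ i, (x i : ℂ) • wbar i) k =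
          Sum.elim (fun k => (x k : ℂ))
            (fun k => ∑ i, (x i : ℂ) * ((X i k : ℂ) - Complex.I * Y i k)) k := by
        simp only [hwbar]
        exact my_repr_sum b _ _ k
      rw [this]
      cases k with
      | inl k => rfl
      | inr k =>
        simp only [Sum.elim_inr]
        rw [← sub_eq_zero, ← Finset.sum_sub_distrib]
        have : ∀ i ∈ Finset.univ, (x i : ℂ) * ((X i k : ℂ) + Complex.I * Y i k)
            - (x i : ℂ) * ((X i k : ℂ) - Complex.I * Y i k)
            = (2 * Complex.I) * ((x i : ℂ) * Y i k) := by
          intro i _; ring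
        rw [Finset.sum_congr rfl this, ← Finset.mul_sum, hYx k, mul_zero]
    have hu0 : u ≠ 0 := by
      obtain ⟨k, hk⟩ := Function.ne_iff.mp hx0
      intro h0
      apply hk
      have := hrepu (Sum.inl k)
      rw [h0] at this
      simp only [map_zero, Finsupp.coe_zero, Pi.zero_apply, Sum.elim_inl] at this
      exact_mod_cast this.symm
    rw [Submodule.ne_bot_iff]
    refine ⟨u, Submodule.mem_inf.mpr ⟨?_, ?_⟩, hu0⟩
    · exact Submodule.sum_mem _ fun i _ => Submodule.smul_mem _ _
        (Submodule.subset_span (Set.mem_range_self i))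
    · rw [hueq]
      exact Submodule.sum_mem _ fun i _ => Submodule.smul_mem _ _
        (Submodule.subset_span (Set.mem_range_self i))
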